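/- arXiv:2602.16439 — 5 statements merged into one kernel-verified Lean document; each statement's English description precedes it below -/
import Mathlib

section
/- Let T > 0, let q ∈ (0,1) and C > 0, and let (f_n)_{n∈ℕ} be a sequence of continuous non-negative real-valued functions on [0,T] satisfying, for every n ∈ ℕ and every t ∈ [0,T], the recursive inequality f_{n+1}(t) ≤ q·f_n(t) + C·∫₀^t f_n(τ) dτ. Then the series Σ_{n=0}^∞ f_n(t) converges uniformly on [0,T] (i.e., the sequence of partial-sum functions converges uniformly on [0,T]). -/
open scoped BigOperators

/-- Lemma 4.2 of the paper: a recursive inequality `f_{n+1}(t) ≤ q f_n(t) + C ∫₀ᵗ f_n`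
with `0 < q < 1` implies uniform convergence of `∑ f_n` on `[0,T]`. -/
theorem recursive_inequality_uniform_convergence
    (T : ℝ) (hT : 0 < T) (q C : ℝ) (hq : q ∈ Set.Ioo (0 : ℝ) 1) (hC : 0 < C)
    (f : ℕ → ℝ → ℝ)
    (hcont : ∀ n, ContinuousOn (f n) (Set.Icc 0 T))
    (hnonneg : ∀ n, ∀ t ∈ Set.Icc (0 : ℝ) T, 0 ≤ f n t)
    (hrec : ∀ n, ∀ t ∈ Set.Icc (0 : ℝ) T,
      f (n + 1) t ≤ q * f n t + C * ∫ τ in (0 : ℝ)..t, f n τ) :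
    ∃ g : ℝ → ℝ, TendstoUniformlyOn
      (fun N t => ∑ n ∈ Finset.range N, f n t) g Filter.atTop (Set.Icc 0 T) := by
  obtain ⟨hq0, hq1⟩ := hq
  set L : ℝ := 2 * C / (1 - q) with hL
  have hq1' : 0 < 1 - q := by linarith
  have hLpos : 0 < L := by positivity
  set r : ℝ := (1 + q) / 2 with hr
  have hr0 : 0 < r := by positivity
  have hr1 : r < 1 := by rw [hr]; linarith
  have hCL : C / L = (1 - q) / 2 := by
    rw [hL]; field_simp
  -- bound for f 0
  obtain ⟨M, hM⟩ := (isCompact_Icc).exists_bound_of_continuousOn (hcont 0)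
  have hM0 : 0 ≤ M := le_trans (norm_nonneg _) (hM 0 ⟨le_rfl, hT.le⟩)
  -- the key inductive bound
  have key : ∀ n, ∀ t ∈ Set.Icc (0 : ℝ) T, f n t ≤ M * r ^ n * Real.exp (L * t) := by
    intro n
    induction n with
    | zero =>
      intro t ht
      have h1 : f 0 t ≤ M := le_trans (le_abs_self _) (by simpa using hM t ht)
      have h2 : (1 : ℝ) ≤ Real.exp (L * t) := by
        rw [Real.one_le_exp_iff]
        exact mul_nonneg hLpos.le ht.1
      calc f 0 t ≤ M := h1
        _ = M * 1 * 1 := by ring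
        _ ≤ M * r ^ 0 * Real.exp (L * t) := by
            apply mul_le_mul (by simp) h2 one_pos.le (by positivity)
    | succ n ih =>
      intro t ht
      obtain ⟨ht0, htT⟩ := ht
      have hsub : Set.uIcc (0 : ℝ) t ⊆ Set.Icc 0 T := by
        rw [Set.uIcc_of_le ht0]
        exact Set.Icc_subset_Icc le_rfl htT
      have hint : IntervalIntegrable (f n) MeasureTheory.volume 0 t :=
        ((hcont n).mono hsub).intervalIntegrable
      have hint2 : IntervalIntegrable (fun τ => M * r ^ n * Real.exp (L * τ))
          MeasureTheory.volume 0 t := (Continuous.intervalIntegrable (by continuity) _ _)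
      have hI : (∫ τ in (0:ℝ)..t, f n τ) ≤ ∫ τ in (0:ℝ)..t, M * r ^ n * Real.exp (L * τ) := by
        apply intervalIntegral.integral_mono_on ht0 hint hint2
        intro x hx
        exact ih x ⟨hx.1, le_trans hx.2 htT⟩
      have hIexp : (∫ τ in (0:ℝ)..t, M * r ^ n * Real.exp (L * τ))
          = M * r ^ n * ((Real.exp (L * t) - 1) / L) := by
        rw [intervalIntegral.integral_const_mul]
        have : (∫ τ in (0:ℝ)..t, Real.exp (L * τ)) = (Real.exp (L * t) - 1) / L := by
          open intervalIntegral in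
          rw [integral_comp_mul_left Real.exp hLpos.ne']
          open intervalIntegral in
          simp [integral_exp, smul_eq_mul, div_eq_inv_mul]
        rw [this]
      have hexp1 : M * r ^ n * ((Real.exp (L * t) - 1) / L)
          ≤ M * r ^ n * (Real.exp (L * t) / L) := by
        apply mul_le_mul_of_nonneg_left _ (by positivity)
        gcongr
        linarith
      calc f (n + 1) t ≤ q * f n t + C * ∫ τ in (0:ℝ)..t, f n τ := hrec n t ⟨ht0, htT⟩
        _ ≤ q * (M * r ^ n * Real.exp (L * t))
            + C * (M * r ^ n * (Real.exp (L * t) / L)) := by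
            apply add_le_add
            · exact mul_le_mul_of_nonneg_left (ih t ⟨ht0, htT⟩) hq0.le
            · apply mul_le_mul_of_nonneg_left _ hC.le
              rw [← hIexp] at hexp1
              exact le_trans hI hexp1
        _ = M * r ^ n * Real.exp (L * t) * (q + C / L) := by
            field_simp
        _ = M * r ^ (n + 1) * Real.exp (L * t) := by
            rw [hCL, hr]; ring
  -- Weierstrass M-test
  have hsum : Summable (fun n => M * Real.exp (L * T) * r ^ n) :=
    (summable_geometric_of_lt_one hr0.le hr1).mul_left _
  refine ⟨fun t => ∑' n, f n t, tendstoUniformlyOn_tsum_nat hsum ?_⟩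
  intro n t ht
  rw [Real.norm_eq_abs, abs_of_nonneg (hnonneg n t ht)]
  calc f n t ≤ M * r ^ n * Real.exp (L * t) := key n t ht
    _ ≤ M * r ^ n * Real.exp (L * T) := by
        apply mul_le_mul_of_nonneg_left _ (by positivity)
        exact Real.exp_le_exp.2 (mul_le_mul_of_nonneg_left ht.2 hLpos.le)
    _ = M * Real.exp (L * T) * r ^ n := by ring
end

section
/- Let T > 0 and C > 0, let (f_n)_{n∈ℕ} be a sequence of continuous non-negative real-valued functions on [0,T], and let (α_n)_{n∈ℕ} be a sequence of non-negative real numbers such that Σ_{n=0}^∞ α_n converges. Assume that for every n ∈ ℕ and every t ∈ [0,T], f_{n+1}(t) ≤ C·∫₀^t f_n(τ) dτ + α_n. Then the series Σ_{n=0}^∞ f_n(t) converges uniformly on [0,T]. -/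
open scoped BigOperators

/-- Lemma 4.3 of the paper: `f_{n+1}(t) ≤ C ∫₀ᵗ f_n + α_n` with `∑ α_n < ∞`
implies uniform convergence of `∑ f_n` on `[0,T]`. -/
theorem recursive_inequality_with_tail_uniform_convergence
    (T : ℝ) (hT : 0 < T) (C : ℝ) (hC : 0 < C)
    (f : ℕ → ℝ → ℝ) (α : ℕ → ℝ)
    (hcont : ∀ n, ContinuousOn (f n) (Set.Icc 0 T))
    (hnonneg : ∀ n, ∀ t ∈ Set.Icc (0 : ℝ) T, 0 ≤ f n t)
    (hα : ∀ n, 0 ≤ α n) (hαsum : Summable α)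
    (hrec : ∀ n, ∀ t ∈ Set.Icc (0 : ℝ) T,
      f (n + 1) t ≤ C * (∫ τ in (0 : ℝ)..t, f n τ) + α n) :
    ∃ g : ℝ → ℝ, TendstoUniformlyOn
      (fun N t => ∑ n ∈ Finset.range N, f n t) g Filter.atTop (Set.Icc 0 T) := by
  have hT0 : (0:ℝ) ≤ T := hT.le
  have hne : (Set.Icc (0:ℝ) T).Nonempty := Set.nonempty_Icc.2 hT0
  have h2C : (0:ℝ) < 2 * C := by linarith
  -- weighted sup
  set u : ℕ → ℝ := fun n => sSup ((fun t => Real.exp (-(2*C)*t) * f n t) '' Set.Icc 0 T) with hu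
  have hgc : ∀ n, ContinuousOn (fun t => Real.exp (-(2*C)*t) * f n t) (Set.Icc 0 T) := by
    intro n
    exact (Continuous.continuousOn (by continuity)).mul (hcont n)
  have hbdd : ∀ n, BddAbove ((fun t => Real.exp (-(2*C)*t) * f n t) '' Set.Icc 0 T) :=
    fun n => (isCompact_Icc.image_of_continuousOn (hgc n)).bddAbove
  have hle : ∀ n, ∀ t ∈ Set.Icc (0:ℝ) T, Real.exp (-(2*C)*t) * f n t ≤ u n :=
    fun n t ht => le_csSup (hbdd n) (Set.mem_image_of_mem _ ht)
  have hu0 : ∀ n, 0 ≤ u n := by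
    intro n
    have h0 : (0:ℝ) ∈ Set.Icc (0:ℝ) T := Set.left_mem_Icc.2 hT0
    have := hle n 0 h0
    have h1 : 0 ≤ Real.exp (-(2*C)*0) * f n 0 :=
      mul_nonneg (Real.exp_nonneg _) (hnonneg n 0 h0)
    linarith
  -- pointwise bound
  have hfle : ∀ n, ∀ t ∈ Set.Icc (0:ℝ) T, f n t ≤ Real.exp (2*C*T) * u n := by
    intro n t ht
    have h1 := hle n t ht
    have hexp : Real.exp (2*C*t) ≤ Real.exp (2*C*T) :=
      Real.exp_le_exp.2 (by nlinarith [ht.1, ht.2])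
    have h2 : f n t = Real.exp (2*C*t) * (Real.exp (-(2*C)*t) * f n t) := by
      rw [← mul_assoc, ← Real.exp_add]; ring_nf; simp
    rw [h2]
    calc Real.exp (2*C*t) * (Real.exp (-(2*C)*t) * f n t)
        ≤ Real.exp (2*C*t) * u n :=
          mul_le_mul_of_nonneg_left h1 (Real.exp_nonneg _)
      _ ≤ Real.exp (2*C*T) * u n := mul_le_mul_of_nonneg_right hexp (hu0 n)
  -- recursion for u
  have hurec : ∀ n, u (n+1) ≤ u n / 2 + α n := by
    intro n
    apply csSup_le (hne.image _)
    rintro x ⟨t, ht, rfl⟩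
    have ht0 : 0 ≤ t := ht.1
    have hsub : Set.Icc (0:ℝ) t ⊆ Set.Icc 0 T := Set.Icc_subset_Icc le_rfl ht.2
    -- integral bound
    have hfi : IntervalIntegrable (f n) MeasureTheory.volume 0 t := by
      apply ContinuousOn.intervalIntegrable
      rw [Set.uIcc_of_le ht0]
      exact (hcont n).mono hsub
    have hgi : IntervalIntegrable (fun τ => u n * Real.exp (2*C*τ))
        MeasureTheory.volume 0 t := (Continuous.intervalIntegrable (by continuity) 0 t)
    have hmono : ∀ τ ∈ Set.Icc (0:ℝ) t, f n τ ≤ u n * Real.exp (2*C*τ) := by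
      intro τ hτ
      have h1 := hle n τ (hsub hτ)
      have h2 : f n τ = Real.exp (2*C*τ) * (Real.exp (-(2*C)*τ) * f n τ) := by
        rw [← mul_assoc, ← Real.exp_add]; ring_nf; simp
      rw [h2, mul_comm (u n)]
      exact mul_le_mul_of_nonneg_left h1 (Real.exp_nonneg _)
    have hint : (∫ τ in (0:ℝ)..t, f n τ) ≤ ∫ τ in (0:ℝ)..t, u n * Real.exp (2*C*τ) :=
      intervalIntegral.integral_mono_on ht0 hfi hgi hmono
    have hexpint : (∫ τ in (0:ℝ)..t, Real.exp (2*C*τ))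
        = (2*C)⁻¹ * (Real.exp (2*C*t) - 1) := by
      have := intervalIntegral.integral_comp_mul_left Real.exp (a := 0) (b := t) h2C.ne'
      simp only [mul_zero, integral_exp, Real.exp_zero, smul_eq_mul] at this ⊢
      rw [this]
    have hexpint2 : (∫ τ in (0:ℝ)..t, u n * Real.exp (2*C*τ))
        = u n * ((2*C)⁻¹ * (Real.exp (2*C*t) - 1)) := by
      rw [intervalIntegral.integral_const_mul, hexpint]
    have key : f (n+1) t ≤ C * (u n * ((2*C)⁻¹ * (Real.exp (2*C*t) - 1))) + α n := by
      have := hrec n t ht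
      calc f (n+1) t ≤ C * (∫ τ in (0:ℝ)..t, f n τ) + α n := this
        _ ≤ C * (u n * ((2*C)⁻¹ * (Real.exp (2*C*t) - 1))) + α n := by
            rw [← hexpint2]
            exact add_le_add_left (mul_le_mul_of_nonneg_left hint hC.le) _
    have hsimp : C * (u n * ((2*C)⁻¹ * (Real.exp (2*C*t) - 1)))
        = u n / 2 * (Real.exp (2*C*t) - 1) := by
      field_simp
    rw [hsimp] at key
    have hexp1 : Real.exp (-(2*C)*t) ≤ 1 := by
      rw [Real.exp_le_one_iff]; nlinarith
    have hexppos : 0 < Real.exp (-(2*C)*t) := Real.exp_pos _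
    have hprod : Real.exp (-(2*C)*t) * Real.exp (2*C*t) = 1 := by
      rw [← Real.exp_add]; ring_nf; exact Real.exp_zero
    have hf1nn : 0 ≤ f (n+1) t := hnonneg (n+1) t ht
    calc Real.exp (-(2*C)*t) * f (n+1) t
        ≤ Real.exp (-(2*C)*t) * (u n / 2 * (Real.exp (2*C*t) - 1) + α n) :=
          mul_le_mul_of_nonneg_left key hexppos.le
      _ ≤ u n / 2 + α n := by nlinarith [hu0 n, hα n, Real.exp_pos (2*C*t)]
  -- summability of u
  have hA : ∀ N, ∑ n ∈ Finset.range N, α n ≤ ∑' n, α n :=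
    fun N => Summable.sum_le_tsum _ (fun i _ => hα i) hαsum
  have hAnn : 0 ≤ ∑' n, α n := tsum_nonneg hα
  have husum : Summable u := by
    apply summable_of_sum_range_le hu0 (c := 2 * (u 0 + ∑' n, α n))
    intro N
    cases N with
    | zero => simp; nlinarith [hu0 0]
    | succ N =>
      have h1 : ∑ n ∈ Finset.range (N+1), u n
          = (∑ n ∈ Finset.range N, u (n+1)) + u 0 := Finset.sum_range_succ' u N
      have h2 : ∑ n ∈ Finset.range N, u (n+1)
          ≤ ∑ n ∈ Finset.range N, (u n / 2 + α n) :=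
        Finset.sum_le_sum (fun i _ => hurec i)
      have h3 : ∑ n ∈ Finset.range N, (u n / 2 + α n)
          = (∑ n ∈ Finset.range N, u n) / 2 + ∑ n ∈ Finset.range N, α n := by
        rw [Finset.sum_add_distrib, Finset.sum_div]
      have h4 : ∑ n ∈ Finset.range N, u n ≤ ∑ n ∈ Finset.range (N+1), u n := by
        apply Finset.sum_le_sum_of_subset_of_nonneg
        · exact Finset.range_subset_range.2 (Nat.le_succ N)
        · intro i _ _; exact hu0 i
      have h5 := hA N
      linarith
  -- Weierstrass M-test
  refine ⟨fun t => ∑' n, f n t, ?_⟩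
  apply tendstoUniformlyOn_tsum_nat (u := fun n => Real.exp (2*C*T) * u n)
  · exact husum.mul_left _
  · intro n t ht
    rw [Real.norm_of_nonneg (hnonneg n t ht)]
    exact hfle n t ht
end

section
/- Let M₀ ≥ 0, q ≥ 0, C ≥ 0, and define a sequence of functions g_n : ℝ → ℝ (n ∈ ℕ) by g₀(t) = M₀ and g_{n+1}(t) = q·g_n(t) + C·∫₀^t g_n(τ) dτ. Then for every n ∈ ℕ and every t ≥ 0, g_n(t) = M₀ · Σ_{k=0}^{n} binom(n,k) · q^{n−k} · (C·t)^k / k!. -/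
open scoped BigOperators

lemma sum_step (q C t : ℝ) (n : ℕ) :
    q * ∑ k ∈ Finset.range (n+1), (n.choose k : ℝ) * q ^ (n-k) * (C*t) ^ k / (Nat.factorial k : ℝ)
    + C * ∑ k ∈ Finset.range (n+1), (n.choose k : ℝ) * q ^ (n-k) * C ^ k * t ^ (k+1) / (Nat.factorial (k+1) : ℝ)
    = ∑ k ∈ Finset.range (n+2), ((n+1).choose k : ℝ) * q ^ (n+1-k) * (C*t) ^ k / (Nat.factorial k : ℝ) := by
  rw [Finset.mul_sum, Finset.mul_sum]
  rw [Finset.sum_range_succ' (fun k => ((n+1).choose k : ℝ) * q ^ (n+1-k) * (C*t) ^ k / (Nat.factorial k : ℝ)) (n+1)]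
  rw [Finset.sum_range_succ' (fun k => q * ((n.choose k : ℝ) * q ^ (n-k) * (C*t) ^ k / (Nat.factorial k : ℝ))) n]
  -- extend first sum from range n to range (n+1): the extra term is 0 since choose n (n+1) = 0
  have hz : q * ((n.choose (n+1) : ℝ) * q ^ (n-(n+1)) * (C*t) ^ (n+1) / (Nat.factorial (n+1) : ℝ)) = 0 := by
    simp [Nat.choose_succ_self]
  rw [show (∑ k ∈ Finset.range n, q * ((n.choose (k+1) : ℝ) * q ^ (n-(k+1)) * (C*t) ^ (k+1) / (Nat.factorial (k+1) : ℝ)))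
      = ∑ k ∈ Finset.range (n+1), q * ((n.choose (k+1) : ℝ) * q ^ (n-(k+1)) * (C*t) ^ (k+1) / (Nat.factorial (k+1) : ℝ)) from
    by rw [Finset.sum_range_succ, hz, add_zero]]
  have key : ∀ k ∈ Finset.range (n+1),
      q * ((n.choose (k+1) : ℝ) * q ^ (n-(k+1)) * (C*t) ^ (k+1) / (Nat.factorial (k+1) : ℝ))
      + C * ((n.choose k : ℝ) * q ^ (n-k) * C ^ k * t ^ (k+1) / (Nat.factorial (k+1) : ℝ))
      = ((n+1).choose (k+1) : ℝ) * q ^ (n+1-(k+1)) * (C*t) ^ (k+1) / (Nat.factorial (k+1) : ℝ) := by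
    intro k hk
    rw [Finset.mem_range] at hk
    have hsub : n + 1 - (k+1) = n - k := by omega
    rw [hsub, Nat.choose_succ_succ]
    push_cast
    rcases Nat.lt_succ_iff_lt_or_eq.mp hk with h | h
    · have h1 : n - (k+1) + 1 = n - k := by omega
      have hqq : q * q ^ (n - (k+1)) = q ^ (n - k) := by
        rw [← h1, pow_succ]; ring
      linear_combination ((n.choose (k+1) : ℝ) * ((C*t) ^ (k+1) / (Nat.factorial (k+1) : ℝ))) * hqq
    · subst h
      simp [Nat.choose_succ_self]
      ring
  rw [add_right_comm, ← Finset.sum_add_distrib, Finset.sum_congr rfl key]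
  have h0 : q * ((n.choose 0 : ℝ) * q ^ (n-0) * (C*t) ^ 0 / (Nat.factorial 0 : ℝ))
      = ((n+1).choose 0 : ℝ) * q ^ (n+1-0) * (C*t) ^ 0 / (Nat.factorial 0 : ℝ) := by
    simp [pow_succ]; ring
  linarith [h0]


/-- Closed-form solution of the linear recurrence `g_{n+1}(t) = q g_n(t) + C ∫₀ᵗ g_n`,
`g₀ ≡ M₀`, derived via generating functions in the proof of Lemma 4.2 of the paper. -/
theorem majorant_sequence_closed_form
    (M₀ q C : ℝ) (hM : 0 ≤ M₀) (hq : 0 ≤ q) (hC : 0 ≤ C)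
    (g : ℕ → ℝ → ℝ)
    (hg0 : ∀ t : ℝ, g 0 t = M₀)
    (hgrec : ∀ n, ∀ t : ℝ, g (n + 1) t = q * g n t + C * ∫ τ in (0 : ℝ)..t, g n τ) :
    ∀ n : ℕ, ∀ t : ℝ, 0 ≤ t →
      g n t = M₀ * ∑ k ∈ Finset.range (n + 1),
        (n.choose k : ℝ) * q ^ (n - k) * (C * t) ^ k / (Nat.factorial k : ℝ) := by
  suffices h : ∀ n : ℕ, ∀ t : ℝ, g n t = M₀ * ∑ k ∈ Finset.range (n + 1),
      (n.choose k : ℝ) * q ^ (n - k) * (C * t) ^ k / (Nat.factorial k : ℝ) by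
    exact fun n t _ => h n t
  intro n
  induction n with
  | zero => intro t; simp [hg0]
  | succ n ih =>
    intro t
    rw [hgrec]
    have hint : (∫ τ in (0:ℝ)..t, g n τ)
        = M₀ * ∑ k ∈ Finset.range (n+1),
          (n.choose k : ℝ) * q ^ (n-k) * C ^ k * t ^ (k+1) / (Nat.factorial (k+1) : ℝ) := by
      simp only [ih]
      rw [intervalIntegral.integral_const_mul]
      rw [intervalIntegral.integral_finset_sum (fun k _ => by
        apply Continuous.intervalIntegrable
        continuity)]
      congr 1
      apply Finset.sum_congr rfl
      intro k _
      have : ∀ τ : ℝ, (n.choose k : ℝ) * q ^ (n-k) * (C*τ) ^ k / (Nat.factorial k : ℝ)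
          = ((n.choose k : ℝ) * q ^ (n-k) * C ^ k / (Nat.factorial k : ℝ)) * τ ^ k := by
        intro τ; rw [mul_pow]; ring
      simp only [this]
      rw [intervalIntegral.integral_const_mul, integral_pow]
      rw [Nat.factorial_succ, zero_pow (Nat.succ_ne_zero k), sub_zero]
      push_cast
      have hk1 : ((k:ℝ)+1) ≠ 0 := by positivity
      have hkf : (Nat.factorial k : ℝ) ≠ 0 := by positivity
      field_simp
    rw [hint, ih]
    rw [show q * (M₀ * ∑ k ∈ Finset.range (n+1), (n.choose k : ℝ) * q ^ (n-k) * (C*t) ^ k / (Nat.factorial k : ℝ))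
        + C * (M₀ * ∑ k ∈ Finset.range (n+1), (n.choose k : ℝ) * q ^ (n-k) * C ^ k * t ^ (k+1) / (Nat.factorial (k+1) : ℝ))
        = M₀ * (q * ∑ k ∈ Finset.range (n+1), (n.choose k : ℝ) * q ^ (n-k) * (C*t) ^ k / (Nat.factorial k : ℝ)
          + C * ∑ k ∈ Finset.range (n+1), (n.choose k : ℝ) * q ^ (n-k) * C ^ k * t ^ (k+1) / (Nat.factorial (k+1) : ℝ)) from by ring]
    rw [sum_step]
end

section
/- Let T > 0 and C ≥ 0, let (f_n)_{n∈ℕ} be a sequence of continuous non-negative real-valued functions on [0,T], and let (α_n)_{n∈ℕ} be non-negative real numbers. Assume that for every n ∈ ℕ and every t ∈ [0,T], f_{n+1}(t) ≤ C·∫₀^t f_n(τ) dτ + α_n. Set M₀ = max_{t∈[0,T]} f₀(t). Then for every n ≥ 1 and every t ∈ [0,T], f_n(t) ≤ M₀·(C·t)^n/n! + Σ_{k=0}^{n−1} α_k · (C·t)^{n−1−k}/(n−1−k)!. -/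
open scoped BigOperators

private lemma integ_term (C t : ℝ) (m : ℕ) :
    C * ∫ τ in (0:ℝ)..t, (C * τ) ^ m / (Nat.factorial m : ℝ)
      = (C * t) ^ (m + 1) / (Nat.factorial (m + 1) : ℝ) := by
  have h : ∀ τ : ℝ, (C * τ) ^ m / (Nat.factorial m : ℝ)
      = (C ^ m / (Nat.factorial m : ℝ)) * τ ^ m := by
    intro τ; rw [mul_pow]; ring
  simp_rw [h, intervalIntegral.integral_const_mul, integral_pow]
  have hm : (Nat.factorial m : ℝ) ≠ 0 := by
    exact_mod_cast (Nat.factorial_pos m).ne'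
  have hm1 : ((m : ℝ) + 1) ≠ 0 := by positivity
  rw [mul_pow, Nat.factorial_succ]
  push_cast
  field_simp
  ring

/-- The inductive pointwise bound from the proof of Lemma 4.3 of the paper:
`f_n(t) ≤ M₀ (Ct)^n/n! + ∑_{k<n} α_k (Ct)^{n-1-k}/(n-1-k)!` for `n ≥ 1`. -/
theorem inductive_pointwise_bound
    (T C : ℝ) (hT : 0 < T) (hC : 0 ≤ C)
    (f : ℕ → ℝ → ℝ) (α : ℕ → ℝ)
    (hcont : ∀ n, ContinuousOn (f n) (Set.Icc 0 T))
    (hnonneg : ∀ n, ∀ t ∈ Set.Icc (0 : ℝ) T, 0 ≤ f n t)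
    (hα : ∀ n, 0 ≤ α n)
    (hrec : ∀ n, ∀ t ∈ Set.Icc (0 : ℝ) T,
      f (n + 1) t ≤ C * (∫ τ in (0 : ℝ)..t, f n τ) + α n) :
    ∀ n : ℕ, 1 ≤ n → ∀ t ∈ Set.Icc (0 : ℝ) T,
      f n t ≤ sSup ((f 0) '' Set.Icc 0 T) * (C * t) ^ n / (Nat.factorial n : ℝ)
        + ∑ k ∈ Finset.range n,
            α k * (C * t) ^ (n - 1 - k) / (Nat.factorial (n - 1 - k) : ℝ) := by
  set M := sSup ((f 0) '' Set.Icc 0 T) with hM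
  have hMub : ∀ τ ∈ Set.Icc (0:ℝ) T, f 0 τ ≤ M := by
    intro τ hτ
    exact le_csSup ((isCompact_Icc.image_of_continuousOn (hcont 0)).bddAbove)
      ⟨τ, hτ, rfl⟩
  intro n hn
  induction n, hn using Nat.le_induction with
  | base =>
    intro t ht
    obtain ⟨ht0, htT⟩ := ht
    have hfi : IntervalIntegrable (f 0) MeasureTheory.volume 0 t := by
      apply ContinuousOn.intervalIntegrable
      rw [Set.uIcc_of_le ht0]
      exact (hcont 0).mono (Set.Icc_subset_Icc le_rfl htT)
    have hint : (∫ τ in (0:ℝ)..t, f 0 τ) ≤ ∫ _τ in (0:ℝ)..t, M := by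
      apply intervalIntegral.integral_mono_on ht0 hfi intervalIntegrable_const
      intro τ hτ
      exact hMub τ ⟨hτ.1, hτ.2.trans htT⟩
    have hc : (∫ _τ in (0:ℝ)..t, M) = t * M := by
      simp [mul_comm]
    calc f 1 t ≤ C * (∫ τ in (0:ℝ)..t, f 0 τ) + α 0 := hrec 0 t ⟨ht0, htT⟩
      _ ≤ C * (t * M) + α 0 := by
          have := mul_le_mul_of_nonneg_left hint hC
          rw [hc] at this; linarith
      _ = M * (C * t) ^ 1 / (Nat.factorial 1 : ℝ)
          + ∑ k ∈ Finset.range 1,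
              α k * (C * t) ^ (1 - 1 - k) / (Nat.factorial (1 - 1 - k) : ℝ) := by
          simp [Nat.factorial]; ring
  | succ n hn IH =>
    intro t ht
    obtain ⟨ht0, htT⟩ := ht
    set G : ℝ → ℝ := fun τ => M * ((C * τ) ^ n / (Nat.factorial n : ℝ))
      + ∑ k ∈ Finset.range n,
          α k * ((C * τ) ^ (n - 1 - k) / (Nat.factorial (n - 1 - k) : ℝ)) with hGdef
    have hfG : ∀ τ ∈ Set.Icc (0:ℝ) t, f n τ ≤ G τ := by
      intro τ hτ
      have := IH τ ⟨hτ.1, hτ.2.trans htT⟩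
      calc f n τ ≤ M * (C * τ) ^ n / (Nat.factorial n : ℝ)
            + ∑ k ∈ Finset.range n,
                α k * (C * τ) ^ (n - 1 - k) / (Nat.factorial (n - 1 - k) : ℝ) := this
        _ = G τ := by
            simp only [hGdef]
            congr 1
            · ring
            · exact Finset.sum_congr rfl fun k _ => by ring
    have hfi : IntervalIntegrable (f n) MeasureTheory.volume 0 t := by
      apply ContinuousOn.intervalIntegrable
      rw [Set.uIcc_of_le ht0]
      exact (hcont n).mono (Set.Icc_subset_Icc le_rfl htT)
    have hGcont : Continuous G := by
      apply Continuous.add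
      · fun_prop
      · apply continuous_finset_sum
        intro k _
        fun_prop
    have hGi : IntervalIntegrable G MeasureTheory.volume 0 t :=
      hGcont.intervalIntegrable 0 t
    have hint : (∫ τ in (0:ℝ)..t, f n τ) ≤ ∫ τ in (0:ℝ)..t, G τ :=
      intervalIntegral.integral_mono_on ht0 hfi hGi hfG
    have hi1 : IntervalIntegrable
        (fun τ => M * ((C * τ) ^ n / (Nat.factorial n : ℝ)))
        MeasureTheory.volume 0 t := by
      apply Continuous.intervalIntegrable; fun_prop
    have hi2 : IntervalIntegrable
        (fun τ => ∑ k ∈ Finset.range n,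
          α k * ((C * τ) ^ (n - 1 - k) / (Nat.factorial (n - 1 - k) : ℝ)))
        MeasureTheory.volume 0 t := by
      apply Continuous.intervalIntegrable
      apply continuous_finset_sum
      intro k _
      fun_prop
    have hGval : C * (∫ τ in (0:ℝ)..t, G τ)
        = M * ((C * t) ^ (n + 1) / (Nat.factorial (n + 1) : ℝ))
          + ∑ k ∈ Finset.range n,
              α k * ((C * t) ^ (n - k) / (Nat.factorial (n - k) : ℝ)) := by
      rw [show (∫ τ in (0:ℝ)..t, G τ)
          = (∫ τ in (0:ℝ)..t, M * ((C * τ) ^ n / (Nat.factorial n : ℝ)))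
            + ∫ τ in (0:ℝ)..t, ∑ k ∈ Finset.range n,
                α k * ((C * τ) ^ (n - 1 - k) / (Nat.factorial (n - 1 - k) : ℝ))
          from intervalIntegral.integral_add hi1 hi2]
      rw [intervalIntegral.integral_finset_sum (fun k _ => by
        apply Continuous.intervalIntegrable; fun_prop)]
      simp_rw [intervalIntegral.integral_const_mul]
      rw [mul_add, Finset.mul_sum]
      rw [show C * (M * ∫ τ in (0:ℝ)..t, (C * τ) ^ n / (Nat.factorial n : ℝ))
          = M * (C * ∫ τ in (0:ℝ)..t, (C * τ) ^ n / (Nat.factorial n : ℝ)) from by ring,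
        integ_term]
      congr 1
      apply Finset.sum_congr rfl
      intro k hk
      rw [show C * (α k * ∫ τ in (0:ℝ)..t,
            (C * τ) ^ (n - 1 - k) / (Nat.factorial (n - 1 - k) : ℝ))
          = α k * (C * ∫ τ in (0:ℝ)..t,
            (C * τ) ^ (n - 1 - k) / (Nat.factorial (n - 1 - k) : ℝ)) from by ring,
        integ_term]
      have : n - 1 - k + 1 = n - k := by
        have := Finset.mem_range.mp hk; omega
      rw [this]
    have hstep : f (n + 1) t ≤ C * (∫ τ in (0:ℝ)..t, f n τ) + α n :=
      hrec n t ⟨ht0, htT⟩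
    have hle2 : C * (∫ τ in (0:ℝ)..t, f n τ) ≤ C * (∫ τ in (0:ℝ)..t, G τ) :=
      mul_le_mul_of_nonneg_left hint hC
    have hfinal : C * (∫ τ in (0:ℝ)..t, G τ) + α n
        = M * (C * t) ^ (n + 1) / (Nat.factorial (n + 1) : ℝ)
          + ∑ k ∈ Finset.range (n + 1),
              α k * (C * t) ^ (n + 1 - 1 - k) / (Nat.factorial (n + 1 - 1 - k) : ℝ) := by
      rw [hGval, Finset.sum_range_succ]
      simp only [Nat.add_sub_cancel, Nat.sub_self, pow_zero, Nat.factorial_zero]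
      push_cast
      rw [show ∑ k ∈ Finset.range n, α k * (C * t) ^ (n - k) / (Nat.factorial (n - k) : ℝ)
          = ∑ k ∈ Finset.range n, α k * ((C * t) ^ (n - k) / (Nat.factorial (n - k) : ℝ))
          from Finset.sum_congr rfl fun k _ => by ring]
      ring
    linarith
end

section
/- Let T > 0 and C ≥ 0, let (f_n)_{n∈ℕ} be a sequence of continuous non-negative real-valued functions on [0,T], and let (α_n)_{n∈ℕ} be non-negative real numbers with Σ_{n=0}^∞ α_n < ∞. Assume that for every n ∈ ℕ and every t ∈ [0,T], f_{n+1}(t) ≤ C·∫₀^t f_n(τ) dτ + α_n. Set M₀ = max_{t∈[0,T]} f₀(t). Then the sequence n ↦ max_{t∈[0,T]} f_n(t) is summable and Σ_{n=0}^{∞} max_{t∈[0,T]} f_n(t) ≤ M₀·e^{C·T} + e^{C·T}·Σ_{k=0}^{∞} α_k. -/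
open scoped BigOperators Nat

lemma pointwise_iter_bound
    (T C : ℝ) (hC : 0 ≤ C)
    (f : ℕ → ℝ → ℝ) (α : ℕ → ℝ)
    (hcont : ∀ n, ContinuousOn (f n) (Set.Icc 0 T))
    (hrec : ∀ n, ∀ t ∈ Set.Icc (0 : ℝ) T,
      f (n + 1) t ≤ C * (∫ τ in (0 : ℝ)..t, f n τ) + α n)
    (M : ℝ) (hM : ∀ t ∈ Set.Icc (0 : ℝ) T, f 0 t ≤ M) :
    ∀ n, ∀ t ∈ Set.Icc (0 : ℝ) T,
      f n t ≤ M * (C ^ n * t ^ n / n !)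
        + ∑ k ∈ Finset.range n, α (n - 1 - k) * (C ^ k * t ^ k / k !) := by
  intro n
  induction n with
  | zero => intro t ht; simpa using hM t ht
  | succ n ih =>
    intro t ht
    obtain ⟨ht0, htT⟩ := ht
    set B : ℝ → ℝ := fun τ => M * (C ^ n * τ ^ n / n !)
        + ∑ k ∈ Finset.range n, α (n - 1 - k) * (C ^ k * τ ^ k / k !) with hB
    have hBcont : Continuous B := by
      apply Continuous.add
      · fun_prop
      · exact continuous_finset_sum _ (fun k _ => by fun_prop)
    have hfint : IntervalIntegrable (f n) MeasureTheory.volume 0 t := by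
      apply ContinuousOn.intervalIntegrable
      apply (hcont n).mono
      rw [Set.uIcc_of_le ht0]
      exact Set.Icc_subset_Icc le_rfl htT
    have hBint : IntervalIntegrable B MeasureTheory.volume 0 t :=
      hBcont.intervalIntegrable 0 t
    have hmono : (∫ τ in (0:ℝ)..t, f n τ) ≤ ∫ τ in (0:ℝ)..t, B τ := by
      apply intervalIntegral.integral_mono_on ht0 hfint hBint
      intro τ hτ
      exact ih τ ⟨hτ.1, hτ.2.trans htT⟩
    have key : ∀ (c : ℝ) (k : ℕ), (∫ τ in (0:ℝ)..t, c * τ ^ k) = c * (t ^ (k+1) / (k+1)) := by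
      intro c k
      rw [intervalIntegral.integral_const_mul, integral_pow]
      simp
    have hIB : (∫ τ in (0:ℝ)..t, B τ)
        = M * C ^ n / n ! * (t ^ (n+1) / (n+1))
          + ∑ k ∈ Finset.range n, α (n - 1 - k) * C ^ k / k ! * (t ^ (k+1) / (k+1)) := by
      have hBeq : B = fun τ => (M * C ^ n / n !) * τ ^ n
          + ∑ k ∈ Finset.range n, (α (n - 1 - k) * C ^ k / k !) * τ ^ k := by
        funext τ; rw [hB]; ring_nf
      rw [hBeq]
      rw [intervalIntegral.integral_add
        (((by fun_prop : Continuous fun τ : ℝ => (M * C ^ n / n !) * τ ^ n)).intervalIntegrable 0 t)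
        (Continuous.intervalIntegrable (continuous_finset_sum _ (fun k _ => by fun_prop)) 0 t)]
      rw [intervalIntegral.integral_finset_sum (fun k _ => ((by fun_prop : Continuous fun τ : ℝ => (α (n - 1 - k) * C ^ k / k !) * τ ^ k)).intervalIntegrable 0 t)]
      rw [key]
      congr 1
      exact Finset.sum_congr rfl (fun k _ => key _ k)
    calc f (n + 1) t ≤ C * (∫ τ in (0:ℝ)..t, f n τ) + α n := hrec n t ⟨ht0, htT⟩
      _ ≤ C * (∫ τ in (0:ℝ)..t, B τ) + α n := by
          exact add_le_add_left (mul_le_mul_of_nonneg_left hmono hC) _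
      _ = M * (C ^ (n+1) * t ^ (n+1) / (n+1)!)
          + ∑ k ∈ Finset.range (n+1), α (n - k) * (C ^ k * t ^ k / k !) := by
          rw [hIB, Finset.sum_range_succ', mul_add, Finset.mul_sum]
          have h1 : C * (M * C ^ n / n ! * (t ^ (n+1) / (n+1)))
              = M * (C ^ (n+1) * t ^ (n+1) / (n+1)!) := by
            have : ((n:ℝ) + 1) ≠ 0 := by positivity
            have hn : (n ! : ℝ) ≠ 0 := by exact_mod_cast n.factorial_ne_zero
            rw [Nat.factorial_succ]
            push_cast
            field_simp
            ring
          have h2 : ∀ k ∈ Finset.range n,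
              C * (α (n - 1 - k) * C ^ k / k ! * (t ^ (k+1) / (k+1)))
              = α (n - (k+1)) * (C ^ (k+1) * t ^ (k+1) / (k+1)!) := by
            intro k _
            have hk : (k ! : ℝ) ≠ 0 := by exact_mod_cast k.factorial_ne_zero
            have : ((k:ℝ) + 1) ≠ 0 := by positivity
            rw [Nat.factorial_succ, Nat.sub_sub, Nat.add_comm 1 k]
            push_cast
            field_simp
            ring
          rw [Finset.sum_congr rfl h2, h1]
          simp only [Nat.sub_zero, pow_zero, Nat.factorial_zero, Nat.cast_one, div_one, one_mul, mul_one]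
          ring

/-- The summed bound concluding the proof of Lemma 4.3 of the paper:
`∑ₙ max_{[0,T]} f_n ≤ M₀ e^{CT} + e^{CT} ∑ α_k`. -/
theorem summed_max_bound
    (T C : ℝ) (hT : 0 < T) (hC : 0 ≤ C)
    (f : ℕ → ℝ → ℝ) (α : ℕ → ℝ)
    (hcont : ∀ n, ContinuousOn (f n) (Set.Icc 0 T))
    (hnonneg : ∀ n, ∀ t ∈ Set.Icc (0 : ℝ) T, 0 ≤ f n t)
    (hα : ∀ n, 0 ≤ α n) (hαsum : Summable α)
    (hrec : ∀ n, ∀ t ∈ Set.Icc (0 : ℝ) T,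
      f (n + 1) t ≤ C * (∫ τ in (0 : ℝ)..t, f n τ) + α n) :
    Summable (fun n => sSup ((f n) '' Set.Icc 0 T)) ∧
    (∑' n : ℕ, sSup ((f n) '' Set.Icc 0 T))
      ≤ sSup ((f 0) '' Set.Icc 0 T) * Real.exp (C * T)
        + Real.exp (C * T) * ∑' k : ℕ, α k := by
  have h0mem : (0 : ℝ) ∈ Set.Icc (0 : ℝ) T := ⟨le_rfl, hT.le⟩
  set g : ℕ → ℝ := fun n => (C * T) ^ n / n ! with hg
  have hgsum : Summable g := Real.summable_pow_div_factorial (C * T)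
  have hexp : Real.exp (C * T) = ∑' n, g n := by
    rw [Real.exp_eq_exp_ℝ, NormedSpace.exp_eq_tsum_div]
  set β : ℕ → ℝ := fun n => ∑ k ∈ Finset.range n, α (n - 1 - k) * g k with hβ
  set CP : ℕ → ℝ := fun n => ∑ k ∈ Finset.range (n + 1), α k * g (n - k) with hCP
  have hα' : Summable (fun n => ‖α n‖) := summable_norm_iff.mpr hαsum
  have hg' : Summable (fun n => ‖g n‖) := summable_norm_iff.mpr hgsum
  have hshift : ∀ n, β (n + 1) = CP n := by
    intro n
    have hrefl := Finset.sum_range_reflect (fun k => α k * g (n - k)) (n + 1)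
    rw [hCP]
    simp only
    rw [← hrefl]
    apply Finset.sum_congr rfl
    intro k hk
    have hk' : k ≤ n := Nat.lt_succ_iff.mp (Finset.mem_range.mp hk)
    congr 2 <;> omega
  have hCPsum : Summable CP :=
    (summable_norm_sum_mul_range_of_summable_norm hα' hg').of_norm
  have hβsum : Summable β := by
    apply (summable_nat_add_iff 1).mp
    exact (funext hshift : (fun n => β (n + 1)) = CP) ▸ hCPsum
  have hβtsum : ∑' n, β n = (∑' n, α n) * ∑' n, g n := by
    rw [Summable.tsum_eq_zero_add hβsum]
    have hβ0 : β 0 = 0 := by simp [hβ]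
    rw [hβ0, zero_add, (funext hshift : (fun n => β (n + 1)) = CP)]
    exact (tsum_mul_tsum_eq_tsum_sum_range_of_summable_norm hα' hg').symm
  set M : ℝ := sSup ((f 0) '' Set.Icc 0 T) with hMdef
  have hbdd : ∀ n, BddAbove ((f n) '' Set.Icc 0 T) :=
    fun n => isCompact_Icc.bddAbove_image (hcont n)
  have hub : ∀ n, ∀ t ∈ Set.Icc (0 : ℝ) T, f n t ≤ sSup ((f n) '' Set.Icc 0 T) :=
    fun n t ht => le_csSup (hbdd n) ⟨t, ht, rfl⟩
  have hM0 : 0 ≤ M := (hnonneg 0 0 h0mem).trans (hub 0 0 h0mem)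
  have hsupnn : ∀ n, 0 ≤ sSup ((f n) '' Set.Icc 0 T) :=
    fun n => (hnonneg n 0 h0mem).trans (hub n 0 h0mem)
  have pointwise := pointwise_iter_bound T C hC f α hcont hrec M (hub 0)
  set b : ℕ → ℝ := fun n => M * g n + β n with hb
  have hble : ∀ n, sSup ((f n) '' Set.Icc 0 T) ≤ b n := by
    intro n
    apply csSup_le ((Set.nonempty_Icc.mpr hT.le).image _)
    rintro y ⟨t, ht, rfl⟩
    calc f n t ≤ M * (C ^ n * t ^ n / n !)
          + ∑ k ∈ Finset.range n, α (n - 1 - k) * (C ^ k * t ^ k / k !) :=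
            pointwise n t ht
      _ ≤ M * (C ^ n * T ^ n / n !)
          + ∑ k ∈ Finset.range n, α (n - 1 - k) * (C ^ k * T ^ k / k !) := by
            gcongr with k hk <;>
              first | exact ht.1 | exact ht.2 | exact hα _ | exact hM0
      _ = b n := by simp [hb, hg, hβ, mul_pow]
  have hbsum : Summable b := (hgsum.mul_left M).add hβsum
  have hsummable : Summable (fun n => sSup ((f n) '' Set.Icc 0 T)) :=
    Summable.of_nonneg_of_le hsupnn hble hbsum
  refine ⟨hsummable, ?_⟩
  calc (∑' n : ℕ, sSup ((f n) '' Set.Icc 0 T)) ≤ ∑' n, b n :=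
        Summable.tsum_le_tsum hble hsummable hbsum
    _ = M * (∑' n, g n) + (∑' n, α n) * ∑' n, g n := by
        rw [hb, Summable.tsum_add (hgsum.mul_left M) hβsum, tsum_mul_left, hβtsum]
    _ = M * Real.exp (C * T) + Real.exp (C * T) * ∑' k, α k := by
        rw [hexp]; ring
end
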